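/- Under the hypotheses of the multiplicative shuffling lemma (j₁, j₂, j_av solving Jacobi equations with curvature schedules κ₁, κ₂, (κ₁+κ₂)/2 respectively, initial conditions j(0)=0, j'(0)=1, and all positive on (0,T]), the inequality j_av(t)² ≥ j₁(t)·j₂(t) holds for all t ∈ [0,T]. -/

import Mathlib

open Filter Set Topology

-- monotone + limit helper
lemma mono_limit_aux {T : ℝ} (f f' : ℝ → ℝ) (L : ℝ)
    (hderiv : ∀ t ∈ Set.Ioc (0:ℝ) T, HasDerivAt f (f' t) t)
    (hnn : ∀ t ∈ Set.Ioo (0:ℝ) T, 0 ≤ f' t)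
    (hlim : Filter.Tendsto f (nhdsWithin 0 (Set.Ioi 0)) (nhds L)) :
    ∀ t ∈ Set.Ioc (0:ℝ) T, L ≤ f t := by
  have hmono : MonotoneOn f (Set.Ioc 0 T) := by
    apply monotoneOn_of_deriv_nonneg (convex_Ioc 0 T)
    · intro x hx; exact (hderiv x hx).continuousAt.continuousWithinAt
    · intro x hx
      rw [interior_Ioc] at hx
      exact (hderiv x (Set.Ioo_subset_Ioc_self hx)).differentiableAt.differentiableWithinAt
    · intro x hx
      rw [interior_Ioc] at hx
      rw [(hderiv x (Set.Ioo_subset_Ioc_self hx)).deriv]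
      exact hnn x hx
  intro t ht
  refine le_of_tendsto hlim ?_
  filter_upwards [Ioc_mem_nhdsGT_of_mem ⟨le_refl 0, ht.1⟩] with s hs
  exact hmono ⟨hs.1, hs.2.trans ht.2⟩ ht hs.2

lemma slope_limit_aux (j : ℝ → ℝ) (c : ℝ) (hd : HasDerivAt j c 0) (h0 : j 0 = 0) :
    Filter.Tendsto (fun s => j s / s) (nhdsWithin 0 (Set.Ioi 0)) (nhds c) := by
  have h1 := hasDerivAt_iff_tendsto_slope.mp hd
  have h2 : Tendsto (slope j 0) (nhdsWithin 0 (Set.Ioi 0)) (nhds c) :=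
    h1.mono_left (nhdsWithin_mono _ (fun x hx => ne_of_gt hx))
  refine h2.congr (fun s => ?_)
  simp [slope_def_field, h0]


theorem multiplicative_lemma_product (T : ℝ) (hT : 0 < T)
    (κ₁ κ₂ : ℝ → ℝ) (hκ₁ : Continuous κ₁) (hκ₂ : Continuous κ₂)
    (j₁ j₂ jav d₁ d₂ dav : ℝ → ℝ)
    (hj₁ : ∀ t, HasDerivAt j₁ (d₁ t) t) (hd₁ : ∀ t, HasDerivAt d₁ (κ₁ t * j₁ t) t)
    (hj₂ : ∀ t, HasDerivAt j₂ (d₂ t) t) (hd₂ : ∀ t, HasDerivAt d₂ (κ₂ t * j₂ t) t)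
    (hjav : ∀ t, HasDerivAt jav (dav t) t)
    (hdav : ∀ t, HasDerivAt dav ((κ₁ t + κ₂ t) / 2 * jav t) t)
    (h₁0 : j₁ 0 = 0) (h₂0 : j₂ 0 = 0) (hav0 : jav 0 = 0)
    (h₁0' : d₁ 0 = 1) (h₂0' : d₂ 0 = 1) (hav0' : dav 0 = 1)
    (hpos₁ : ∀ t ∈ Set.Ioc (0 : ℝ) T, 0 < j₁ t)
    (hpos₂ : ∀ t ∈ Set.Ioc (0 : ℝ) T, 0 < j₂ t)
    (hposav : ∀ t ∈ Set.Ioc (0 : ℝ) T, 0 < jav t) :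
    ∀ t ∈ Set.Icc (0 : ℝ) T, jav t ^ 2 ≥ j₁ t * j₂ t := by
  set N : ℝ → ℝ := fun t => 2 * dav t * (j₁ t * j₂ t) - jav t * (d₁ t * j₂ t + d₂ t * j₁ t)
    with hNdef
  -- derivative of N (the curvature terms cancel)
  have hN : ∀ t, HasDerivAt N
      (dav t * (d₁ t * j₂ t + d₂ t * j₁ t) - 2 * jav t * (d₁ t * d₂ t)) t := by
    intro t
    have h : HasDerivAt N
        ((2 * ((κ₁ t + κ₂ t) / 2 * jav t)) * (j₁ t * j₂ t)
          + (2 * dav t) * (d₁ t * j₂ t + j₁ t * d₂ t)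
          - (dav t * (d₁ t * j₂ t + d₂ t * j₁ t)
            + jav t * ((κ₁ t * j₁ t * j₂ t + d₁ t * d₂ t) + (κ₂ t * j₂ t * j₁ t + d₂ t * d₁ t)))) t := by
      exact (((hdav t).const_mul 2).mul ((hj₁ t).mul (hj₂ t))).sub
        ((hjav t).mul (((hd₁ t).mul (hj₂ t)).add ((hd₂ t).mul (hj₁ t))))
    convert h using 1
    ring
  have hN0 : N 0 = 0 := by simp [hNdef, h₁0, h₂0, hav0]
  -- slope limits at 0+
  have hl₁ := slope_limit_aux j₁ 1 (by rw [← h₁0']; exact hj₁ 0) h₁0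
  have hl₂ := slope_limit_aux j₂ 1 (by rw [← h₂0']; exact hj₂ 0) h₂0
  have hlav := slope_limit_aux jav 1 (by rw [← hav0']; exact hjav 0) hav0
  have hlN : Tendsto (fun s => N s / s) (nhdsWithin 0 (Set.Ioi 0)) (nhds 0) := by
    have h := hN 0
    rw [show dav 0 * (d₁ 0 * j₂ 0 + d₂ 0 * j₁ 0) - 2 * jav 0 * (d₁ 0 * d₂ 0) = 0 by
      simp [h₁0, h₂0, hav0]] at h
    exact slope_limit_aux N 0 h hN0
  have hlQ : Tendsto (fun s => (j₁ s / s) * (j₂ s / s)) (nhdsWithin 0 (Set.Ioi 0)) (nhds 1) := by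
    have := hl₁.mul hl₂; simpa using this
  have hlsqrt : Tendsto (fun s => Real.sqrt ((j₁ s / s) * (j₂ s / s)))
      (nhdsWithin 0 (Set.Ioi 0)) (nhds 1) := by
    have := (Real.continuous_sqrt.tendsto 1).comp hlQ
    simpa [Function.comp_def] using this
  -- φ = N / sqrt (j₁ j₂)
  set φ : ℝ → ℝ := fun t => N t / Real.sqrt (j₁ t * j₂ t) with hφdef
  set φ' : ℝ → ℝ := fun t =>
    jav t * (d₁ t * j₂ t - d₂ t * j₁ t) ^ 2 / (2 * (j₁ t * j₂ t) * Real.sqrt (j₁ t * j₂ t))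
    with hφ'def
  have hφderiv : ∀ t ∈ Set.Ioc (0:ℝ) T, HasDerivAt φ (φ' t) t := by
    intro t ht
    have hQpos : 0 < j₁ t * j₂ t := mul_pos (hpos₁ t ht) (hpos₂ t ht)
    have ha : 0 < Real.sqrt (j₁ t * j₂ t) := Real.sqrt_pos.mpr hQpos
    have ha2 : Real.sqrt (j₁ t * j₂ t) ^ 2 = j₁ t * j₂ t := Real.sq_sqrt (le_of_lt hQpos)
    have hs : HasDerivAt (fun y => Real.sqrt (j₁ y * j₂ y))
        ((d₁ t * j₂ t + j₁ t * d₂ t) / (2 * Real.sqrt (j₁ t * j₂ t))) t :=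
      ((hj₁ t).mul (hj₂ t)).sqrt (ne_of_gt hQpos)
    have hmessy : HasDerivAt φ
        (((dav t * (d₁ t * j₂ t + d₂ t * j₁ t) - 2 * jav t * (d₁ t * d₂ t))
            * Real.sqrt (j₁ t * j₂ t)
          - N t * ((d₁ t * j₂ t + j₁ t * d₂ t) / (2 * Real.sqrt (j₁ t * j₂ t))))
          / Real.sqrt (j₁ t * j₂ t) ^ 2) t := (hN t).div hs (ne_of_gt ha)
    convert hmessy using 1
    rw [hφ'def]
    simp only
    have hane := ne_of_gt ha
    have key : 2 * (dav t * (d₁ t * j₂ t + d₂ t * j₁ t) - 2 * jav t * (d₁ t * d₂ t))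
            * (j₁ t * j₂ t) - N t * (d₁ t * j₂ t + j₁ t * d₂ t)
        = jav t * (d₁ t * j₂ t - d₂ t * j₁ t) ^ 2 := by
      simp only [hNdef]; ring
    generalize hg : Real.sqrt (j₁ t * j₂ t) = a at ha ha2 hane ⊢
    have e1 : ((dav t * (d₁ t * j₂ t + d₂ t * j₁ t) - 2 * jav t * (d₁ t * d₂ t)) * a
          - N t * ((d₁ t * j₂ t + j₁ t * d₂ t) / (2 * a))) / a ^ 2
        = (2 * (dav t * (d₁ t * j₂ t + d₂ t * j₁ t) - 2 * jav t * (d₁ t * d₂ t)) * a ^ 2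
           - N t * (d₁ t * j₂ t + j₁ t * d₂ t)) / (2 * a ^ 2 * a) := by
      field_simp
    rw [e1, ha2, key]
  have hφnn : ∀ t ∈ Set.Ioo (0:ℝ) T, 0 ≤ φ' t := by
    intro t ht
    have ht' : t ∈ Set.Ioc (0:ℝ) T := ⟨ht.1, le_of_lt ht.2⟩
    have hQpos : 0 < j₁ t * j₂ t := mul_pos (hpos₁ t ht') (hpos₂ t ht')
    have ha : 0 < Real.sqrt (j₁ t * j₂ t) := Real.sqrt_pos.mpr hQpos
    exact div_nonneg (mul_nonneg (hposav t ht').le (sq_nonneg _)) (by positivity)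
  -- limit of φ at 0+
  have hlφ : Tendsto φ (nhdsWithin 0 (Set.Ioi 0)) (nhds 0) := by
    have h0 : Tendsto (fun s => (N s / s) / Real.sqrt ((j₁ s / s) * (j₂ s / s)))
        (nhdsWithin 0 (Set.Ioi 0)) (nhds 0) := by
      have := hlN.div hlsqrt one_ne_zero; simpa [Pi.div_def] using this
    refine h0.congr' ?_
    filter_upwards [Ioo_mem_nhdsGT_of_mem ⟨le_refl 0, hT⟩] with s hs
    have hs0 : (0:ℝ) < s := hs.1
    have hQnn : 0 ≤ j₁ s * j₂ s :=
      (mul_pos (hpos₁ s ⟨hs.1, hs.2.le⟩) (hpos₂ s ⟨hs.1, hs.2.le⟩)).le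
    have h1 : (j₁ s / s) * (j₂ s / s) = (j₁ s * j₂ s) / s ^ 2 := by ring
    rw [h1, Real.sqrt_div hQnn, Real.sqrt_sq hs0.le]
    rw [hφdef]
    simp only
    have hane : Real.sqrt (j₁ s * j₂ s) ≠ 0 := Real.sqrt_ne_zero'.mpr
      (mul_pos (hpos₁ s ⟨hs.1, hs.2.le⟩) (hpos₂ s ⟨hs.1, hs.2.le⟩))
    field_simp
  -- N is nonnegative on (0, T]
  have hNnn : ∀ t ∈ Set.Ioc (0:ℝ) T, 0 ≤ N t := by
    intro t ht
    have hQpos : 0 < j₁ t * j₂ t := mul_pos (hpos₁ t ht) (hpos₂ t ht)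
    have ha : 0 < Real.sqrt (j₁ t * j₂ t) := Real.sqrt_pos.mpr hQpos
    have h := mono_limit_aux φ φ' 0 hφderiv hφnn hlφ t ht
    calc (0:ℝ) = 0 * Real.sqrt (j₁ t * j₂ t) := by ring
    _ ≤ φ t * Real.sqrt (j₁ t * j₂ t) := by
        exact mul_le_mul_of_nonneg_right h ha.le
    _ = N t := div_mul_cancel₀ _ (ne_of_gt ha)
  -- ratio r = jav² / (j₁ j₂)
  set r : ℝ → ℝ := fun t => jav t ^ 2 / (j₁ t * j₂ t) with hrdef
  set r' : ℝ → ℝ := fun t =>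
    ((2:ℕ) * jav t ^ (2-1) * dav t * (j₁ t * j₂ t) - jav t ^ 2 * (d₁ t * j₂ t + j₁ t * d₂ t))
      / (j₁ t * j₂ t) ^ 2 with hr'def
  have hrderiv : ∀ t ∈ Set.Ioc (0:ℝ) T, HasDerivAt r (r' t) t := by
    intro t ht
    have hQpos : 0 < j₁ t * j₂ t := mul_pos (hpos₁ t ht) (hpos₂ t ht)
    exact ((hjav t).pow 2).div ((hj₁ t).mul (hj₂ t)) (ne_of_gt hQpos)
  have hrnn : ∀ t ∈ Set.Ioo (0:ℝ) T, 0 ≤ r' t := by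
    intro t ht
    have ht' : t ∈ Set.Ioc (0:ℝ) T := ⟨ht.1, le_of_lt ht.2⟩
    have hnum : (2:ℕ) * jav t ^ (2-1) * dav t * (j₁ t * j₂ t)
        - jav t ^ 2 * (d₁ t * j₂ t + j₁ t * d₂ t) = jav t * N t := by
      simp only [hNdef]; push_cast; ring
    rw [hr'def]
    simp only
    rw [hnum]
    exact div_nonneg (mul_nonneg (hposav t ht').le (hNnn t ht')) (sq_nonneg _)
  have hlr : Tendsto r (nhdsWithin 0 (Set.Ioi 0)) (nhds 1) := by
    have h0 : Tendsto (fun s => (jav s / s) ^ 2 / ((j₁ s / s) * (j₂ s / s)))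
        (nhdsWithin 0 (Set.Ioi 0)) (nhds 1) := by
      have := (hlav.pow 2).div hlQ one_ne_zero; simpa [Pi.div_def] using this
    refine h0.congr' ?_
    filter_upwards [Ioo_mem_nhdsGT_of_mem ⟨le_refl 0, hT⟩] with s hs
    have hs0 : (0:ℝ) < s := hs.1
    have hQpos : 0 < j₁ s * j₂ s := mul_pos (hpos₁ s ⟨hs.1, hs.2.le⟩) (hpos₂ s ⟨hs.1, hs.2.le⟩)
    rw [hrdef]
    simp only
    field_simp
  have hr1 := mono_limit_aux r r' 1 hrderiv hrnn hlr
  intro t ht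
  rcases eq_or_lt_of_le ht.1 with h | h
  · rw [← h, hav0, h₁0, h₂0]; norm_num
  · have ht' : t ∈ Set.Ioc (0:ℝ) T := ⟨h, ht.2⟩
    have hQpos : 0 < j₁ t * j₂ t := mul_pos (hpos₁ t ht') (hpos₂ t ht')
    have := hr1 t ht'
    rw [hrdef] at this
    simp only at this
    exact (one_le_div hQpos).mp this
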